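/- Let d be a positive even integer, H_k = F_{2+d(k-1)}, A = K_d - 1, B = F_{2+d} - 1. Then for all n ≥ 1, 1 + eval(β^(n)) = H_{n+1}, where β^(1) = (B), β^(2) = (B-1, A), and for n ≥ 3, β^(n) = (B-1, A-1, A-1, ..., A-1, A) with n entries (first entry B-1, last entry A, and A-1 in between), and eval(ε) = Σ_k ε_k H_k. -/

import Mathlib

/-- Lucas sequence: K 1 = 1, K 2 = 3, K (k+2) = K (k+1) + K k. -/
def lucas : ℕ → ℕ
  | 0 => 2
  | 1 => 1
  | n + 2 => lucas (n + 1) + lucas n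

/-- The Chung–Graham rule of expansion for even interval `d`,
with `A = lucas d - 1` and `B = Nat.fib (2 + d) - 1`.
Sequences are indexed from 1 (so `ε 0 = 0`) and finitely supported. -/
def CGRule (d : ℕ) (ε : ℕ → ℕ) : Prop :=
  ε 0 = 0 ∧
  {k | ε k ≠ 0}.Finite ∧
  ε 1 ≤ Nat.fib (2 + d) - 1 ∧
  (∀ k, 2 ≤ k → ε k ≤ lucas d - 1) ∧
  (∀ m, 2 ≤ m → ε m = lucas d - 1 →
    (∀ k, 2 ≤ k → k ≤ m - 1 → ε k = lucas d - 1 - 1) →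
    ε 1 < Nat.fib (2 + d) - 1) ∧
  (∀ k j, 2 ≤ k → k < j → ε k = lucas d - 1 → ε j = lucas d - 1 →
    ∃ c, k < c ∧ c < j ∧ ε c ≤ lucas d - 1 - 2)

/-- Lexicographic-from-the-right strict order on coefficient sequences. -/
def CGlt (ε τ : ℕ → ℕ) : Prop :=
  ∃ ℓ, ε ℓ < τ ℓ ∧ ∀ k, ℓ < k → ε k = τ k

/-- The maximal coefficient sequence `β⁽ⁿ⁾` of order `n` (indexed from 1),
for `A = lucas d - 1`, `B = Nat.fib (2 + d) - 1`. -/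
def cgBeta (d n : ℕ) : ℕ → ℕ := fun k =>
  if n = 1 then (if k = 1 then Nat.fib (2 + d) - 1 else 0)
  else if k = 1 then Nat.fib (2 + d) - 1 - 1
  else if k = n then lucas d - 1
  else if 2 ≤ k ∧ k ≤ n - 1 then lucas d - 1 - 1
  else 0


open Nat

open Nat

lemma lucas_pos : ∀ d, 1 ≤ lucas d := by
  intro d
  induction d using Nat.twoStepInduction with
  | zero => simp [lucas]
  | one => simp [lucas]
  | more n ih1 ih2 => rw [lucas]; omega

lemma lucas_fib : ∀ d, lucas (d+1) = Nat.fib d + Nat.fib (d+2) := by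
  intro d
  induction d using Nat.twoStepInduction with
  | zero => simp [lucas]
  | one => decide
  | more n ih1 ih2 =>
    have h3 : lucas (n+3) = lucas (n+2) + lucas (n+1) := rfl
    have i1 : lucas (n+1) = fib n + fib (n+2) := ih1
    have i2 : lucas (n+2) = fib (n+1) + fib (n+3) := ih2
    have f1 : fib (n+2) = fib n + fib (n+1) := Nat.fib_add_two
    have f2 : fib (n+3) = fib (n+1) + fib (n+2) := Nat.fib_add_two
    have f3 : fib (n+4) = fib (n+2) + fib (n+3) := Nat.fib_add_two
    show lucas (n+3) = fib (n+2) + fib (n+4)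
    omega

lemma fib_two_mul' : ∀ d, Nat.fib (2*d) = lucas d * Nat.fib d := by
  intro d
  match d with
  | 0 => simp
  | e+1 =>
    rw [Nat.fib_two_mul, lucas_fib, show e+1+1 = e+2 from rfl]
    have h1 : fib (e+2) = fib e + fib (e+1) := Nat.fib_add_two
    have h2 : 2 * fib (e+2) - fib (e+1) = fib e + fib (e+2) := by omega
    rw [h2]; ring

lemma cassini_pair : ∀ k, fib (2*k) * fib (2*k+2) + 1 = fib (2*k+1)^2
    ∧ fib (2*k+1) * fib (2*k+3) = fib (2*k+2)^2 + 1 := by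
  intro k
  induction k with
  | zero => decide
  | succ n ih =>
    obtain ⟨h1, h2⟩ := ih
    have e1 : fib (2*n+3) = fib (2*n+1) + fib (2*n+2) := Nat.fib_add_two
    have e2 : fib (2*n+4) = fib (2*n+2) + fib (2*n+3) := Nat.fib_add_two
    have e3 : fib (2*n+5) = fib (2*n+3) + fib (2*n+4) := Nat.fib_add_two
    have g1 : fib (2*n+2) * fib (2*n+4) + 1 = fib (2*n+3)^2 := by nlinarith
    have g2 : fib (2*n+3) * fib (2*n+5) = fib (2*n+4)^2 + 1 := by nlinarith
    exact ⟨g1, g2⟩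

lemma base1 : ∀ k, fib (4*k+1) + 1 = lucas (2*k) * fib (2*k+1) := by
  intro k
  match k with
  | 0 => decide
  | j+1 =>
    have hl : lucas (2*j+2) = fib (2*j+1) + fib (2*j+3) := lucas_fib (2*j+1)
    have hf : fib (2*(2*j+2)+1) = fib (2*j+3)^2 + fib (2*j+2)^2 :=
      Nat.fib_two_mul_add_one (n := 2*j+2)
    have hc := (cassini_pair j).2
    rw [show 4*(j+1)+1 = 2*(2*j+2)+1 by ring, hf,
      show 2*(j+1) = 2*j+2 by ring, show 2*j+2+1 = 2*j+3 by ring, hl]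
    nlinarith

lemma keyid (k : ℕ) : ∀ m, fib (m + 4*k) + fib m = lucas (2*k) * fib (m + 2*k) := by
  intro m
  induction m using Nat.twoStepInduction with
  | zero =>
    simp only [Nat.zero_add, Nat.fib_zero, Nat.add_zero]
    rw [show 4*k = 2*(2*k) by ring]
    exact fib_two_mul' (2*k)
  | one =>
    rw [show 1+4*k = 4*k+1 by omega, show 1+2*k = 2*k+1 by omega]
    simpa using base1 k
  | more m ih1 ih2 =>
    rw [show m+1+4*k = m+4*k+1 by omega, show m+1+2*k = m+2*k+1 by omega] at ih2
    rw [show m+2+4*k = m+4*k+2 by omega, show m+2+2*k = m+2*k+2 by omega]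
    have f1 : fib (m+4*k+2) = fib (m+4*k) + fib (m+4*k+1) := Nat.fib_add_two
    have f2 : fib (m+2) = fib m + fib (m+1) := Nat.fib_add_two
    have f3 : fib (m+2*k+2) = fib (m+2*k) + fib (m+2*k+1) := Nat.fib_add_two
    rw [f1, f2, f3, Nat.mul_add]
    omega

lemma cgBeta_sum (d n : ℕ) (hn : 1 ≤ n) :
    ∑ᶠ k, cgBeta d n k * Nat.fib (2 + d * (k - 1)) =
      ∑ k ∈ Finset.range (n+1), cgBeta d n k * Nat.fib (2 + d * (k - 1)) := by
  apply finsum_eq_sum_of_support_subset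
  intro x hx
  simp only [Function.mem_support] at hx
  simp only [Finset.coe_range, Set.mem_Iio]
  by_contra hc
  push_neg at hc
  apply hx
  have : cgBeta d n x = 0 := by
    simp only [cgBeta]; split_ifs <;> omega
  rw [this, Nat.zero_mul]


theorem stmt_4 (d : ℕ) (hd : 0 < d) (hde : Even d) :
    ∀ n, 1 ≤ n →
      1 + ∑ᶠ k, cgBeta d n k * Nat.fib (2 + d * (k - 1)) =
        Nat.fib (2 + d * n) := by
  obtain ⟨kk, hkd⟩ := hde
  have hluc : 2 ≤ lucas d := by
    obtain ⟨e, rfl⟩ : ∃ e, d = e + 2 := ⟨d - 2, by omega⟩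
    have h1 := lucas_pos e
    have h2 := lucas_pos (e+1)
    rw [lucas]; omega
  have hfib : 2 ≤ fib (2 + d) := by
    have h1 : fib 3 ≤ fib (2 + d) := Nat.fib_mono (by omega)
    simpa [show fib 3 = 2 by decide] using h1
  intro n hn
  induction n, hn using Nat.le_induction with
  | base =>
    rw [cgBeta_sum d 1 le_rfl, Finset.sum_range_succ, Finset.sum_range_one]
    have h0 : cgBeta d 1 0 = 0 := by simp [cgBeta]
    have h1 : cgBeta d 1 1 = fib (2 + d) - 1 := by simp [cgBeta]
    rw [h0, h1]
    simp only [Nat.zero_mul, Nat.sub_self, Nat.mul_zero, Nat.mul_one, Nat.zero_add]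
    simpa using by omega
  | succ n hn1 ih =>
    rw [cgBeta_sum d n hn1, Finset.sum_range_succ] at ih
    rw [cgBeta_sum d (n+1) (by omega), Finset.sum_range_succ, Finset.sum_range_succ]
    have hcongr : ∑ k ∈ Finset.range n, cgBeta d (n+1) k * fib (2 + d * (k - 1)) =
        ∑ k ∈ Finset.range n, cgBeta d n k * fib (2 + d * (k - 1)) := by
      apply Finset.sum_congr rfl
      intro k hk
      have hkn : k < n := Finset.mem_range.mp hk
      have : cgBeta d (n+1) k = cgBeta d n k := by
        simp only [cgBeta]; split_ifs <;> omega
      rw [this]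
    rw [hcongr]
    have hv1 : cgBeta d (n+1) (n+1) = lucas d - 1 := by
      simp only [cgBeta]; split_ifs <;> omega
    have hvb : cgBeta d (n+1) n = cgBeta d n n - 1 := by
      simp only [cgBeta]; split_ifs <;> omega
    have hb1 : 1 ≤ cgBeta d n n := by
      simp only [cgBeta]; split_ifs <;> omega
    have hkey : fib (2 + d*(n+1)) + fib (2 + d*(n-1)) = lucas d * fib (2 + d*n) := by
      have h := keyid kk (2 + d*(n-1))
      have q1 : d*(n+1) = d*(n-1) + 2*d := by
        nth_rewrite 1 [show n+1 = (n-1)+2 by omega]; ring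
      have q2 : d*n = d*(n-1) + d := by
        nth_rewrite 1 [show n = (n-1)+1 by omega]; ring
      have e1 : 2 + d*(n-1) + 4*kk = 2 + d*(n+1) := by omega
      have e2 : 2 + d*(n-1) + 2*kk = 2 + d*n := by omega
      have e3 : 2*kk = d := by omega
      rw [e1, e2, e3] at h
      exact h
    rw [hv1, hvb]
    simp only [Nat.add_sub_cancel]
    rw [Nat.sub_one_mul, Nat.sub_one_mul]
    have hle1 : fib (2 + d*(n-1)) ≤ cgBeta d n n * fib (2 + d*(n-1)) :=
      Nat.le_mul_of_pos_left _ hb1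
    have hle2 : fib (2 + d*n) ≤ lucas d * fib (2 + d*n) :=
      Nat.le_mul_of_pos_left _ (by omega)
    omega
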